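/- Let Z be a locally compact Hausdorff space, C ⊆ Z a closed subset, X a Hausdorff space, and f : X → Z a continuous map whose image is contained in Z ∖ C and which is proper as a map into the subspace Z ∖ C (preimages of compact subsets of Z ∖ C are compact). Then there exist a Hausdorff topological space X̄, an open embedding ι : X → X̄, and a proper continuous map f̄ : X̄ → Z with f̄ ∘ ι = f, such that f̄ restricts to a homeomorphism from X̄ ∖ ι(X) (with the subspace topology) onto C. In other words, f can be compactified over C by adding a single point in each fiber over C so that the extended map is proper. -/

import Mathlib

set_option linter.unusedSectionVars false

universe u

/-- `(Xb, tb, ι, fb)` is a proper extension of `f : X → Z` over the closed set `C`: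
`Xb` is Hausdorff, `ι` is an open embedding, `fb` is a proper continuous map with
`fb ∘ ι = f`, and `fb` restricts to a homeomorphism from `Xb ∖ ι(X)` onto `C`. -/
def IsProperOnePointedExtension {X Z : Type u} [TopologicalSpace X]
    [TopologicalSpace Z] (C : Set Z) (f : X → Z)
    (Xb : Type u) (tb : TopologicalSpace Xb) (ι : X → Xb) (fb : Xb → Z) : Prop :=
  letI := tb
  T2Space Xb ∧ Topology.IsOpenEmbedding ι ∧ Continuous fb ∧
    (∀ K : Set Z, IsCompact K → IsCompact (fb ⁻¹' K)) ∧
    fb ∘ ι = f ∧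
    ∃ e : ((Set.range ι)ᶜ : Set Xb) ≃ₜ C,
      ∀ p : ((Set.range ι)ᶜ : Set Xb), (e p : Z) = fb p.1

namespace OnePointedExtAux

open Set TopologicalSpace Topology

variable {X Z : Type u} [TopologicalSpace X] [TopologicalSpace Z]
  (C : Set Z) (f : X → Z)

/-- The extended map on the disjoint union. -/
def fb : X ⊕ ↥C → Z := Sum.elim f Subtype.val

/-- The generating family of opens on the disjoint union. -/
def gens : Set (Set (X ⊕ ↥C)) :=
  {W | ∃ V : Set X, IsOpen V ∧ W = Sum.inl '' V} ∪
  {W | ∃ U : Set Z, IsOpen U ∧ W = fb C f ⁻¹' U}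

/-- The topology on the compactification. -/
def tb : TopologicalSpace (X ⊕ ↥C) := generateFrom (gens C f)

lemma inl_preimage_image (V : Set X) :
    Sum.inl ⁻¹' (Sum.inl '' V : Set (X ⊕ ↥C)) = V :=
  Set.preimage_image_eq _ Sum.inl_injective

lemma inl_preimage_fb (U : Set Z) :
    Sum.inl ⁻¹' (fb C f ⁻¹' U) = f ⁻¹' U := rfl

lemma image_inter_fb (V : Set X) (U : Set Z) :
    (Sum.inl '' V : Set (X ⊕ ↥C)) ∩ fb C f ⁻¹' U = Sum.inl '' (V ∩ f ⁻¹' U) := by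
  ext p
  cases p with
  | inl x =>
    simp [fb, Sum.inl_injective.mem_set_image]
  | inr c =>
    simp

lemma basis (hf : Continuous f) : @IsTopologicalBasis _ (tb C f) (gens C f) := by
  letI := tb C f
  refine ⟨?_, ?_, rfl⟩
  · rintro t₁ ht₁ t₂ ht₂ x hx
    rcases ht₁ with ⟨V₁, hV₁, rfl⟩ | ⟨U₁, hU₁, rfl⟩ <;>
      rcases ht₂ with ⟨V₂, hV₂, rfl⟩ | ⟨U₂, hU₂, rfl⟩
    · exact ⟨Sum.inl '' (V₁ ∩ V₂), Or.inl ⟨_, hV₁.inter hV₂, rfl⟩,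
        by rwa [Set.image_inter Sum.inl_injective], le_of_eq (Set.image_inter Sum.inl_injective)⟩
    · refine ⟨Sum.inl '' (V₁ ∩ f ⁻¹' U₂), Or.inl ⟨_, hV₁.inter (hU₂.preimage hf), rfl⟩, ?_, ?_⟩
      · rwa [image_inter_fb] at hx
      · rw [← image_inter_fb]
    · refine ⟨Sum.inl '' (V₂ ∩ f ⁻¹' U₁), Or.inl ⟨_, hV₂.inter (hU₁.preimage hf), rfl⟩, ?_, ?_⟩
      · rw [← image_inter_fb]; rwa [Set.inter_comm] at hx
      · rw [← image_inter_fb, Set.inter_comm]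
    · exact ⟨fb C f ⁻¹' (U₁ ∩ U₂), Or.inr ⟨_, hU₁.inter hU₂, rfl⟩, hx,
        le_of_eq (Set.preimage_inter)⟩
  · apply Set.eq_univ_of_univ_subset
    intro p _
    exact ⟨fb C f ⁻¹' Set.univ, Or.inr ⟨Set.univ, isOpen_univ, rfl⟩, trivial⟩

lemma isOpen_of_mem_gens {W : Set (X ⊕ ↥C)} (hW : W ∈ gens C f) :
    @IsOpen _ (tb C f) W :=
  @isOpen_generateFrom_of_mem _ _ _ hW

lemma continuous_fb : @Continuous _ _ (tb C f) _ (fb C f) := by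
  letI := tb C f
  rw [continuous_def]
  intro U hU
  exact isOpen_of_mem_gens C f (Or.inr ⟨U, hU, rfl⟩)

lemma continuous_inl (hf : Continuous f) : @Continuous _ _ _ (tb C f) (Sum.inl : X → X ⊕ ↥C) := by
  rw [tb, continuous_generateFrom_iff]
  rintro W (⟨V, hV, rfl⟩ | ⟨U, hU, rfl⟩)
  · rw [inl_preimage_image]; exact hV
  · exact hU.preimage hf

lemma continuous_inr : @Continuous _ _ _ (tb C f) (Sum.inr : ↥C → X ⊕ ↥C) := by
  rw [tb, continuous_generateFrom_iff]
  rintro W (⟨V, hV, rfl⟩ | ⟨U, hU, rfl⟩)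
  · convert isOpen_empty
    ext c; simp
  · exact hU.preimage continuous_subtype_val

lemma isOpenEmbedding_inl (hf : Continuous f) : @IsOpenEmbedding _ _ _ (tb C f) (Sum.inl : X → X ⊕ ↥C) := by
  letI := tb C f
  refine Topology.IsOpenEmbedding.of_continuous_injective_isOpenMap
    (continuous_inl C f hf) Sum.inl_injective ?_
  intro V hV
  exact isOpen_of_mem_gens C f (Or.inl ⟨V, hV, rfl⟩)

variable [T2Space X] [T2Space Z]

lemma t2 (hrange : ∀ x, f x ∉ C) : @T2Space _ (tb C f) := by
  letI := tb C f
  rw [t2Space_iff]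
  intro a b hab
  by_cases hfab : fb C f a = fb C f b
  · -- then both must be `inl`
    match a, b with
    | Sum.inl x, Sum.inl y =>
      obtain ⟨u, v, hu, hv, hxu, hyv, huv⟩ :=
        t2_separation (show x ≠ y by rintro rfl; exact hab rfl)
      exact ⟨Sum.inl '' u, Sum.inl '' v,
        isOpen_of_mem_gens C f (Or.inl ⟨u, hu, rfl⟩),
        isOpen_of_mem_gens C f (Or.inl ⟨v, hv, rfl⟩),
        ⟨x, hxu, rfl⟩, ⟨y, hyv, rfl⟩,
        (Set.disjoint_image_of_injective Sum.inl_injective huv)⟩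
    | Sum.inl x, Sum.inr c =>
      simp only [fb, Sum.elim_inl, Sum.elim_inr] at hfab
      exact absurd (hfab ▸ c.2) (hrange x)
    | Sum.inr c, Sum.inl x =>
      simp only [fb, Sum.elim_inl, Sum.elim_inr] at hfab
      exact absurd (hfab ▸ c.2) (hrange x)
    | Sum.inr c, Sum.inr c' =>
      simp only [fb, Sum.elim_inr] at hfab
      exact absurd (congrArg Sum.inr (Subtype.ext hfab)) hab
  · obtain ⟨u, v, hu, hv, hau, hbv, huv⟩ := t2_separation hfab
    exact ⟨fb C f ⁻¹' u, fb C f ⁻¹' v,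
      isOpen_of_mem_gens C f (Or.inr ⟨u, hu, rfl⟩),
      isOpen_of_mem_gens C f (Or.inr ⟨v, hv, rfl⟩),
      hau, hbv, huv.preimage _⟩

lemma proper (hf : Continuous f) (hC : IsClosed C) (hrange : ∀ x, f x ∉ C)
    (hproper : ∀ K : Set Z, IsCompact K → Disjoint K C → IsCompact (f ⁻¹' K))
    (K : Set Z) (hK : IsCompact K) :
    @IsCompact _ (tb C f) (fb C f ⁻¹' K) := by
  classical
  letI := tb C f
  apply isCompact_of_finite_subcover
  intro ι U hUopen hcov
  -- for each point of K ∩ C, choose a basic neighborhood inside a cover element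
  have key : ∀ c : ↥(K ∩ C), ∃ (i : ι) (V : Set Z), IsOpen V ∧ (c : Z) ∈ V ∧
      fb C f ⁻¹' V ⊆ U i := by
    rintro ⟨c, hcK, hcC⟩
    have hmem : (Sum.inr ⟨c, hcC⟩ : X ⊕ ↥C) ∈ fb C f ⁻¹' K := hcK
    obtain ⟨i, hi⟩ := Set.mem_iUnion.1 (hcov hmem)
    obtain ⟨t, ht, hmt, hsub⟩ :=
      (basis C f hf).exists_subset_of_mem_open hi (hUopen i)
    rcases ht with ⟨V, hV, rfl⟩ | ⟨V, hV, rfl⟩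
    · exfalso; rcases hmt with ⟨x, -, hx⟩; exact Sum.inl_ne_inr hx
    · exact ⟨i, V, hV, hmt, hsub⟩
  choose idx V hVopen hVmem hVsub using key
  have hKC : IsCompact (K ∩ C) := hK.inter_right hC
  have hcovKC : K ∩ C ⊆ ⋃ c : ↥(K ∩ C), V c := fun z hz =>
    Set.mem_iUnion.2 ⟨⟨z, hz⟩, hVmem ⟨z, hz⟩⟩
  obtain ⟨s, hs⟩ := hKC.elim_finite_subcover V hVopen hcovKC
  set Vu : Set Z := ⋃ c ∈ s, V c with hVu
  have hVuOpen : IsOpen Vu := isOpen_biUnion fun c _ => hVopen c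
  have hK' : IsCompact (K \ Vu) := hK.diff hVuOpen
  have hdisj : Disjoint (K \ Vu) C := by
    rw [Set.disjoint_left]
    rintro z ⟨hzK, hzV⟩ hzC
    exact hzV (hs ⟨hzK, hzC⟩)
  have hcomp : IsCompact (f ⁻¹' (K \ Vu)) := hproper _ hK' hdisj
  have hcomp' : IsCompact ((Sum.inl : X → X ⊕ ↥C) '' (f ⁻¹' (K \ Vu))) :=
    hcomp.image (continuous_inl C f hf)
  have hsub' : (Sum.inl : X → X ⊕ ↥C) '' (f ⁻¹' (K \ Vu)) ⊆ ⋃ i, U i := by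
    rintro p ⟨x, hx, rfl⟩
    exact hcov hx.1
  obtain ⟨t, ht⟩ := hcomp'.elim_finite_subcover U hUopen hsub'
  refine ⟨t ∪ s.image idx, ?_⟩
  intro p hp
  by_cases hpV : fb C f p ∈ Vu
  · rw [hVu] at hpV
    obtain ⟨c, hcs, hcV⟩ := Set.mem_iUnion₂.1 hpV
    refine Set.mem_biUnion ?_ (hVsub c hcV)
    exact Finset.mem_union_right _ (Finset.mem_image_of_mem idx hcs)
  · match p with
    | Sum.inl x =>
      have : (Sum.inl x : X ⊕ ↥C) ∈ ⋃ i ∈ t, U i := ht ⟨x, ⟨hp, hpV⟩, rfl⟩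
      obtain ⟨i, hit, hiU⟩ := Set.mem_iUnion₂.1 this
      exact Set.mem_biUnion (Finset.mem_union_left _ hit) hiU
    | Sum.inr c =>
      exact absurd (hs ⟨hp, c.2⟩) hpV

end OnePointedExtAux

/-- Let `Z` be locally compact Hausdorff, `C ⊆ Z` closed, `X`
Hausdorff, and `f : X → Z` continuous with image in `Z ∖ C` and proper as a map into
`Z ∖ C`. Then `f` admits a proper extension `f̄ : X̄ → Z` obtained by adjoining `C`:
`ι : X → X̄` is an open embedding, `f̄ ∘ ι = f`, `f̄` is proper, and `f̄` restricts to a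
homeomorphism from `X̄ ∖ ι(X)` onto `C`. -/
theorem exists_proper_compactification_over_closed_set
    {X Z : Type u} [TopologicalSpace X] [T2Space X]
    [TopologicalSpace Z] [T2Space Z] [LocallyCompactSpace Z]
    (C : Set Z) (hC : IsClosed C) (f : X → Z) (hf : Continuous f)
    (hrange : ∀ x, f x ∉ C)
    (hproper : ∀ K : Set Z, IsCompact K → Disjoint K C → IsCompact (f ⁻¹' K)) :
    ∃ (Xb : Type u) (tb : TopologicalSpace Xb) (ι : X → Xb) (fb : Xb → Z),
      IsProperOnePointedExtension C f Xb tb ι fb := by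
  classical
  open OnePointedExtAux in
  refine ⟨X ⊕ ↥C, OnePointedExtAux.tb C f, Sum.inl, OnePointedExtAux.fb C f, ?_⟩
  letI := OnePointedExtAux.tb C f
  refine ⟨OnePointedExtAux.t2 C f hrange, OnePointedExtAux.isOpenEmbedding_inl C f hf,
    OnePointedExtAux.continuous_fb C f, OnePointedExtAux.proper C f hf hC hrange hproper,
    rfl, ?_⟩
  -- the homeomorphism on the boundary
  have hmemC : ∀ p : ((Set.range (Sum.inl : X → X ⊕ ↥C))ᶜ : Set (X ⊕ ↥C)),
      OnePointedExtAux.fb C f p.1 ∈ C := by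
    rintro ⟨p, hp⟩
    match p with
    | Sum.inl x => exact absurd ⟨x, rfl⟩ hp
    | Sum.inr c => exact c.2
  refine ⟨{ toFun := fun p => ⟨OnePointedExtAux.fb C f p.1, hmemC p⟩
            invFun := fun c => ⟨Sum.inr c, by simp [Set.mem_compl_iff]⟩
            left_inv := ?_
            right_inv := fun c => rfl
            continuous_toFun := ?_
            continuous_invFun := ?_ }, fun p => rfl⟩
  · rintro ⟨p, hp⟩
    match p with
    | Sum.inl x => exact absurd ⟨x, rfl⟩ hp
    | Sum.inr c => rfl
  · exact Continuous.subtype_mk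
      ((OnePointedExtAux.continuous_fb C f).comp continuous_subtype_val) _
  · exact Continuous.subtype_mk (OnePointedExtAux.continuous_inr C f) _
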